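/- There is no elliptic curve E over F_27 with exactly 22 rational points. -/

import Mathlib

set_option maxHeartbeats 1000000

def F27 : Type := Fin 27

namespace F27

instance : DecidableEq F27 := inferInstanceAs (DecidableEq (Fin 27))
instance : Fintype F27 := inferInstanceAs (Fintype (Fin 27))

def MT : Nat := 169450701153666751949435235053662983512175134493715542868491816394344444395069633829411599137353387309847889786515457461830998810472537359336524468324111682681169303243517750402295910612986777564847694918696851351313038449006327160975906567253681147860843206242135258326319667080911053184255812383401490083535477325425072788932770134250468653208348820821436134520591555939530803962514221576359968664226282194555565196389104776797431179317211961489844771236638722633242782155457404506450071535357250178058528802926368780779984075857118339864709521444766046755289972827750002761991760931010772998873138080428946531694460846364506681933710817386797670469292534142972293717897544771347116855116014374868430383783467351777225051183527003550537901902963525410387993093123385752463192565953591419856156443653362873779010376219504732888458997726406685292891597124535598471863180064110620731994502174785208964395418140781756776776469856193575203412214886159895546399518063901285592453380325306450930811379258183372433030842150476458348294817295092448314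
def AT : Nat := 145211176327639676902252175577570942826722320198291908384589454884039751254212999732483813125628261782886095988927924250304219125416220558693345349102030881084187878061246299699947699683984611224915217327172245753597002415985676007879104156074032686379545860704725814081094335552543796354665531953724134684907086154371367566839769352290027938814081525985001105058204575926578506736707727793044130980729751453081142381694826392528749524681614366075484251068314662505158606805411503708251585301839625519739325743619382618572813877690588762972264234683091781862341648010161552173677122590855052110881052326512911805805685849669479082361641474135542659543553108006481760019341467352360656573082308204061168724012807090140789329230525812542312426434133209890646382768683906492642002728195020957984086519315398217044646484134501402605761367385959764872662138710060338748830089577953085277279820548668179528973615838806900711352198847152894469240462104410404444471249289260741898135112107853596311063247440149489975575360439142812601610217185582380257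
def NT : Nat := 222301611436406420482730537982972474555

private lemma mlt (a : Nat) : a % 27 < 27 := Nat.mod_lt _ (by norm_num)

instance : Zero F27 := ⟨⟨0, by norm_num⟩⟩
instance : One F27 := ⟨⟨1, by norm_num⟩⟩
instance : Add F27 := ⟨fun x y => ⟨AT / 27^(x.1*27+y.1) % 27, mlt _⟩⟩
instance : Mul F27 := ⟨fun x y => ⟨MT / 27^(x.1*27+y.1) % 27, mlt _⟩⟩
instance : Neg F27 := ⟨fun x => ⟨NT / 27^x.1 % 27, mlt _⟩⟩

instance : CommRing F27 where
  add_assoc := by decide +kernel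
  zero_add := by decide +kernel
  add_zero := by decide +kernel
  add_comm := by decide +kernel
  neg_add_cancel := by decide +kernel
  mul_assoc := by decide +kernel
  one_mul := by decide +kernel
  mul_one := by decide +kernel
  left_distrib := by decide +kernel
  right_distrib := by decide +kernel
  mul_comm := by decide +kernel
  zero_mul := by decide +kernel
  mul_zero := by decide +kernel
  nsmul := nsmulRec
  zsmul := zsmulRec

instance : Nontrivial F27 := ⟨0, 1, by decide +kernel⟩

instance : NoZeroDivisors F27 where
  eq_zero_or_eq_zero_of_mul_eq_zero {a b} h := by
    have H : ∀ a b : F27, a * b = 0 → a = 0 ∨ b = 0 := by decide +kernel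
    exact H a b h

instance : IsDomain F27 := NoZeroDivisors.to_isDomain _

noncomputable instance : Field F27 := Fintype.fieldOfDomain F27

lemma card_eq : Fintype.card F27 = 27 := rfl

instance : CharP F27 3 := (CharP.charP_iff_prime_eq_zero Nat.prime_three).2 (by decide +kernel)

lemma exists_sq_scale : ∀ a : F27, a ≠ 0 → ∃ u : F27, u ≠ 0 ∧ (u^2 * a = 1 ∨ u^2 * a = -1) := by
  decide +kernel

lemma exists_pow4_scale : ∀ a : F27, a ≠ 0 → ∃ u : F27, u ≠ 0 ∧ (u^4 * a = 1 ∨ u^4 * a = -1) := by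
  decide +kernel

lemma count1 : ∀ s a₆ : F27, s = 1 ∨ s = -1 →
    Fintype.card {p : F27 × F27 // p.2^2 = p.1^3 + s*p.1^2 + a₆} ≠ 21 := by
  decide +kernel

lemma count2 : ∀ s a₆ : F27, s = 1 ∨ s = -1 →
    Fintype.card {p : F27 × F27 // p.2^2 = p.1^3 + s*p.1 + a₆} ≠ 21 := by
  decide +kernel

end F27
section Glue

open WeierstrassCurve WeierstrassCurve.Affine

variable {K : Type*} [Field K]

/-- The points of an affine Weierstrass curve, as an option type over affine solutions. -/
def pointEquivAux (W : WeierstrassCurve K) :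
    W.toAffine.Point ≃ Option {p : K × K // W.toAffine.Nonsingular p.1 p.2} where
  toFun P := match P with
    | .zero => none
    | @Point.some _ _ _ x y h => some ⟨(x, y), h⟩
  invFun o := match o with
    | none => .zero
    | some ⟨(x, y), h⟩ => .some x y h
  left_inv P := by cases P <;> rfl
  right_inv o := by rcases o with _ | ⟨⟨x, y⟩, h⟩ <;> rfl

lemma card_point_eq (W : WeierstrassCurve K) [Fintype K] (hΔ : W.Δ ≠ 0) :
    Nat.card W.toAffine.Point
      = 1 + Nat.card {p : K × K // W.toAffine.Equation p.1 p.2} := by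
  classical
  rw [Nat.card_congr (pointEquivAux W), Nat.card_congr
    (Equiv.optionCongr (Equiv.subtypeEquivRight (q := fun p : K × K =>
      W.toAffine.Equation p.1 p.2) (fun p =>
      ⟨fun h => h.1, fun h => (W.toAffine.equation_iff_nonsingular_of_Δ_ne_zero hΔ).mp h⟩))),
    Finite.card_option, add_comm]

lemma card_equation_map {F : Type*} [Field F] (W : WeierstrassCurve F) (σ : F ≃+* K) :
    Nat.card {p : F × F // W.toAffine.Equation p.1 p.2}
      = Nat.card {p : K × K // (W.map (σ : F →+* K)).toAffine.Equation p.1 p.2} := by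
  apply Nat.card_congr
  refine ⟨fun p => ⟨((σ : F →+* K) p.1.1, (σ : F →+* K) p.1.2),
      (map_equation (f := (σ : F →+* K)) W.toAffine σ.injective _ _).mpr p.2⟩,
    fun q => ⟨(σ.symm q.1.1, σ.symm q.1.2), ?_⟩, fun p => by ext <;> simp, fun q => by ext <;> simp⟩
  · have h1 : q.1.1 = (σ : F →+* K) (σ.symm q.1.1) := (σ.apply_symm_apply q.1.1).symm
    have h2 : q.1.2 = (σ : F →+* K) (σ.symm q.1.2) := (σ.apply_symm_apply q.1.2).symm
    exact (map_equation (f := (σ : F →+* K)) W.toAffine σ.injective _ _).mp (h1 ▸ h2 ▸ q.2)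

/-- Algebraic identity underlying invariance of the Weierstrass equation
under change of variables. -/
lemma vc_equation (W : WeierstrassCurve K) (C : VariableChange K) (x y : K) :
    (C • W).toAffine.Equation x y ↔
      W.toAffine.Equation ((C.u : K) ^ 2 * x + C.r)
        ((C.u : K) ^ 3 * y + (C.u : K) ^ 2 * C.s * x + C.t) := by
  have hu : (C.u : K) ≠ 0 := C.u.ne_zero
  rw [equation_iff', equation_iff']
  simp only [variableChange_a₁, variableChange_a₂, variableChange_a₃, variableChange_a₄,
    variableChange_a₆, Units.val_inv_eq_inv_val]
  rw [show ((C.u : K) ^ 3 * y + (C.u : K) ^ 2 * C.s * x + C.t) ^ 2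
        + W.a₁ * ((C.u : K) ^ 2 * x + C.r) * ((C.u : K) ^ 3 * y + (C.u : K) ^ 2 * C.s * x + C.t)
        + W.a₃ * ((C.u : K) ^ 3 * y + (C.u : K) ^ 2 * C.s * x + C.t)
        - (((C.u : K) ^ 2 * x + C.r) ^ 3 + W.a₂ * ((C.u : K) ^ 2 * x + C.r) ^ 2
          + W.a₄ * ((C.u : K) ^ 2 * x + C.r) + W.a₆)
      = (C.u : K) ^ 6 * (y ^ 2 + (C.u : K)⁻¹ * (W.a₁ + 2 * C.s) * x * y
        + (C.u : K)⁻¹ ^ 3 * (W.a₃ + C.r * W.a₁ + 2 * C.t) * y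
        - (x ^ 3 + (C.u : K)⁻¹ ^ 2 * (W.a₂ - C.s * W.a₁ + 3 * C.r - C.s ^ 2) * x ^ 2
          + (C.u : K)⁻¹ ^ 4 * (W.a₄ - C.s * W.a₃ + 2 * C.r * W.a₂ - (C.t + C.r * C.s) * W.a₁
            + 3 * C.r ^ 2 - 2 * C.s * C.t) * x
          + (C.u : K)⁻¹ ^ 6 * (W.a₆ + C.r * W.a₄ + C.r ^ 2 * W.a₂ + C.r ^ 3 - C.t * W.a₃
            - C.t ^ 2 - C.r * C.t * W.a₁)))
      from by field_simp; ring]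
  rw [mul_eq_zero]
  simp [pow_ne_zero, hu]

lemma card_equation_vc (W : WeierstrassCurve K) (C : VariableChange K) :
    Nat.card {p : K × K // (C • W).toAffine.Equation p.1 p.2}
      = Nat.card {p : K × K // W.toAffine.Equation p.1 p.2} := by
  have hu : (C.u : K) ≠ 0 := C.u.ne_zero
  apply Nat.card_congr
  refine ⟨fun p => ⟨((C.u : K) ^ 2 * p.1.1 + C.r,
      (C.u : K) ^ 3 * p.1.2 + (C.u : K) ^ 2 * C.s * p.1.1 + C.t),
      (vc_equation W C p.1.1 p.1.2).mp p.2⟩,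
    fun q => ⟨(((C.u : K)⁻¹) ^ 2 * (q.1.1 - C.r),
      ((C.u : K)⁻¹) ^ 3 * (q.1.2 - C.s * (q.1.1 - C.r) - C.t)), ?_⟩, fun p => ?_, fun q => ?_⟩
  · apply (vc_equation W C _ _).mpr
    have h1 : (C.u : K) ^ 2 * (((C.u : K)⁻¹) ^ 2 * (q.1.1 - C.r)) + C.r = q.1.1 := by
      field_simp; ring
    have h2 : (C.u : K) ^ 3 * (((C.u : K)⁻¹) ^ 3 * (q.1.2 - C.s * (q.1.1 - C.r) - C.t))
        + (C.u : K) ^ 2 * C.s * (((C.u : K)⁻¹) ^ 2 * (q.1.1 - C.r)) + C.t = q.1.2 := by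
      field_simp; ring
    rw [h1, h2]
    exact q.2
  · ext
    · show ((C.u : K)⁻¹) ^ 2 * (((C.u : K) ^ 2 * p.1.1 + C.r) - C.r) = p.1.1
      field_simp; ring
    · show ((C.u : K)⁻¹) ^ 3 * (((C.u : K) ^ 3 * p.1.2 + (C.u : K) ^ 2 * C.s * p.1.1 + C.t)
        - C.s * (((C.u : K) ^ 2 * p.1.1 + C.r) - C.r) - C.t) = p.1.2
      field_simp; ring
  · ext
    · show (C.u : K) ^ 2 * (((C.u : K)⁻¹) ^ 2 * (q.1.1 - C.r)) + C.r = q.1.1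
      field_simp; ring
    · show (C.u : K) ^ 3 * (((C.u : K)⁻¹) ^ 3 * (q.1.2 - C.s * (q.1.1 - C.r) - C.t))
        + (C.u : K) ^ 2 * C.s * (((C.u : K)⁻¹) ^ 2 * (q.1.1 - C.r)) + C.t = q.1.2
      field_simp; ring

end Glue
open WeierstrassCurve WeierstrassCurve.Affine

/-- There is no elliptic curve over the field with 27 elements having exactly 22
rational points. -/
theorem stmt_7 (F : Type*) [Field F] [Fintype F] (hF : Fintype.card F = 27)
    (W : WeierstrassCurve F) [W.IsElliptic] :
    Nat.card W.toAffine.Point ≠ 22 := by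
  classical
  intro hcard
  have h27 : Fintype.card F = Fintype.card F27 := by rw [hF, F27.card_eq]
  set σ : F ≃+* F27 := FiniteField.ringEquivOfCardEq h27 with hσ
  set W1 : WeierstrassCurve F27 := W.map (σ : F →+* F27) with hW1
  have hΔ : W.Δ ≠ 0 := by rw [← W.coe_Δ']; exact W.Δ'.ne_zero
  have hΔ1 : W1.Δ ≠ 0 := by
    rw [hW1, map_Δ]
    exact (map_ne_zero_iff _ σ.injective).mpr hΔ
  obtain ⟨C, hC⟩ := W1.exists_variableChange_isCharThreeNF
  set W2 : WeierstrassCurve F27 := C • W1 with hW2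
  have hΔ2 : W2.Δ ≠ 0 := by
    rw [hW2, variableChange_Δ]
    exact mul_ne_zero (pow_ne_zero _ C.u⁻¹.ne_zero) hΔ1
  have hcount2 : Nat.card {p : F27 × F27 // W2.toAffine.Equation p.1 p.2} = 21 := by
    have e1 := card_point_eq W hΔ
    have e2 := card_equation_map W σ
    have e3 := card_equation_vc W1 C
    rw [e1, e2, ← hW1] at hcard
    rw [← hW2] at e3
    omega
  cases hC with
  | of_j_ne_zero =>
    rename_i inst
    have ha₁ : W2.a₁ = 0 := W2.a₁_of_isCharThreeJNeZeroNF
    have ha₃ : W2.a₃ = 0 := W2.a₃_of_isCharThreeJNeZeroNF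
    have ha₄ : W2.a₄ = 0 := W2.a₄_of_isCharThreeJNeZeroNF
    have hΔeq : W2.Δ = -W2.a₂ ^ 3 * W2.a₆ := W2.Δ_of_isCharThreeJNeZeroNF_of_char_three
    have ha₂ : W2.a₂ ≠ 0 := by
      intro h; rw [hΔeq, h] at hΔ2; simp at hΔ2
    obtain ⟨u, hu, hs⟩ := F27.exists_sq_scale W2.a₂ ha₂
    set D : VariableChange F27 := ⟨(Units.mk0 u hu)⁻¹, 0, 0, 0⟩ with hD
    have hDu : ((D.u⁻¹ : F27ˣ) : F27) = u := by rw [hD]; simp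
    set W3 : WeierstrassCurve F27 := D • W2 with hW3
    have h1 : W3.a₁ = 0 := by
      rw [hW3, variableChange_a₁, hDu, ha₁, hD]; ring
    have h3 : W3.a₃ = 0 := by
      rw [hW3, variableChange_a₃, hDu, ha₃, hD]; ring
    have h4 : W3.a₄ = 0 := by
      rw [hW3, variableChange_a₄, hDu, ha₄, ha₃, ha₁, hD]; ring
    have h2 : W3.a₂ = u ^ 2 * W2.a₂ := by
      rw [hW3, variableChange_a₂, hDu, ha₁, hD]; ring
    have hs' : W3.a₂ = 1 ∨ W3.a₂ = -1 := by rw [h2]; exact hs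
    have heq : ∀ x y : F27, W3.toAffine.Equation x y ↔
        y ^ 2 = x ^ 3 + W3.a₂ * x ^ 2 + W3.a₆ := by
      intro x y
      rw [equation_iff, h1, h3, h4]; ring_nf
    have e4 := card_equation_vc W2 D
    rw [← hW3, hcount2] at e4
    rw [Nat.card_congr (Equiv.subtypeEquivRight
        (p := fun p : F27 × F27 => W3.toAffine.Equation p.1 p.2)
        (q := fun p : F27 × F27 => p.2 ^ 2 = p.1 ^ 3 + W3.a₂ * p.1 ^ 2 + W3.a₆)
        fun p => heq p.1 p.2),
      Nat.card_eq_fintype_card] at e4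
    exact F27.count1 W3.a₂ W3.a₆ hs' e4
  | of_j_eq_zero =>
    rename_i inst
    have ha₁ : W2.a₁ = 0 := W2.a₁_of_isShortNF
    have ha₂ : W2.a₂ = 0 := W2.a₂_of_isShortNF
    have ha₃ : W2.a₃ = 0 := W2.a₃_of_isShortNF
    have hΔeq : W2.Δ = -W2.a₄ ^ 3 := W2.Δ_of_isShortNF_of_char_three
    have ha₄ : W2.a₄ ≠ 0 := by
      intro h; rw [hΔeq, h] at hΔ2; simp at hΔ2
    obtain ⟨u, hu, hs⟩ := F27.exists_pow4_scale W2.a₄ ha₄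
    set D : VariableChange F27 := ⟨(Units.mk0 u hu)⁻¹, 0, 0, 0⟩ with hD
    have hDu : ((D.u⁻¹ : F27ˣ) : F27) = u := by rw [hD]; simp
    set W3 : WeierstrassCurve F27 := D • W2 with hW3
    have h1 : W3.a₁ = 0 := by
      rw [hW3, variableChange_a₁, hDu, ha₁, hD]; ring
    have h2 : W3.a₂ = 0 := by
      rw [hW3, variableChange_a₂, hDu, ha₂, ha₁, hD]; ring
    have h3 : W3.a₃ = 0 := by
      rw [hW3, variableChange_a₃, hDu, ha₃, ha₁, hD]; ring
    have h4 : W3.a₄ = u ^ 4 * W2.a₄ := by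
      rw [hW3, variableChange_a₄, hDu, ha₃, ha₂, ha₁, hD]; ring
    have hs' : W3.a₄ = 1 ∨ W3.a₄ = -1 := by rw [h4]; exact hs
    have heq : ∀ x y : F27, W3.toAffine.Equation x y ↔
        y ^ 2 = x ^ 3 + W3.a₄ * x + W3.a₆ := by
      intro x y
      rw [equation_iff, h1, h2, h3]; ring_nf
    have e4 := card_equation_vc W2 D
    rw [← hW3, hcount2] at e4
    rw [Nat.card_congr (Equiv.subtypeEquivRight
        (p := fun p : F27 × F27 => W3.toAffine.Equation p.1 p.2)
        (q := fun p : F27 × F27 => p.2 ^ 2 = p.1 ^ 3 + W3.a₄ * p.1 + W3.a₆)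
        fun p => heq p.1 p.2),
      Nat.card_eq_fintype_card] at e4
    exact F27.count2 W3.a₄ W3.a₆ hs' e4
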